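/- Let X be a Banach space, d ≥ 1, and T_1, ..., T_d : X → X commuting linear contractions. Let x ∈ X with ‖x‖ ≤ 1, and define ergodic averages x_n := (n+1)^(−d) Σ_{k ∈ [0,n]^d} T^k x. Define Φ(d,δ,Q) := max(Q, ⌈2^d Q / δ⌉). Then for every δ > 0, every Q ∈ ℕ, and every convex combination z = Σ_{j ∈ [0,Q]^d} c_j T^j x with (c_j) ⊆ [0,1] and Σ_j c_j = 1, and every n ≥ Φ(d,δ,Q), one has ‖x_n‖ ≤ ‖z‖ + δ. -/

import Mathlib

/-- `box d n` is `[0,n]^d`. -/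
def box (d n : ℕ) : Finset (Fin d → ℕ) := Fintype.piFinset fun _ => Finset.range (n+1)

/-- `Tpow T k = T₁^{k₁} ⋯ T_d^{k_d}`. -/
def Tpow {X : Type*} [AddCommGroup X] [Module ℝ X] {d : ℕ}
    (T : Fin d → X →ₗ[ℝ] X) (k : Fin d → ℕ) : X →ₗ[ℝ] X :=
  (List.ofFn fun l => T l ^ k l).prod

/-- The multi-parameter ergodic average `x_n = (n+1)^{-d} ∑_{k ∈ [0,n]^d} T^k x`. -/
noncomputable def erg {X : Type*} [AddCommGroup X] [Module ℝ X] {d : ℕ}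
    (T : Fin d → X →ₗ[ℝ] X) (x : X) (n : ℕ) : X :=
  ((n+1 : ℝ)^d)⁻¹ • ∑ k ∈ box d n, Tpow T k x

/-- `Φ(d,δ,Q) := max(Q, ⌈2^d Q / δ⌉)`. -/
noncomputable def Phi (d : ℕ) (δ : ℝ) (Q : ℕ) : ℕ := max Q ⌈(2^d * Q : ℝ) / δ⌉₊

section Aux

lemma list_prod_contr {X : Type*} [NormedAddCommGroup X] [NormedSpace ℝ X] :
    ∀ (L : List (X →ₗ[ℝ] X)), (∀ f ∈ L, ∀ y : X, ‖f y‖ ≤ ‖y‖) → ∀ y : X, ‖L.prod y‖ ≤ ‖y‖ := by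
  intro L
  induction L with
  | nil => intro _ y; simp [Module.End.one_apply]
  | cons f t ih =>
    intro h y
    rw [List.prod_cons, Module.End.mul_apply]
    exact le_trans (h f (List.mem_cons_self (a := f) (l := t)) _) (ih (fun g hg => h g (List.mem_cons_of_mem _ hg)) y)

lemma pow_contr {X : Type*} [NormedAddCommGroup X] [NormedSpace ℝ X]
    (f : X →ₗ[ℝ] X) (hf : ∀ y : X, ‖f y‖ ≤ ‖y‖) : ∀ (m : ℕ) (y : X), ‖(f ^ m) y‖ ≤ ‖y‖ := by
  intro m
  induction m with
  | zero => intro y; simp [Module.End.one_apply]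
  | succ m ih =>
    intro y
    rw [pow_succ, Module.End.mul_apply]
    exact le_trans (ih (f y)) (hf y)

lemma Tpow_contr {X : Type*} [NormedAddCommGroup X] [NormedSpace ℝ X] {d : ℕ}
    (T : Fin d → X →ₗ[ℝ] X) (hcontr : ∀ l (y : X), ‖T l y‖ ≤ ‖y‖)
    (k : Fin d → ℕ) (y : X) : ‖Tpow T k y‖ ≤ ‖y‖ := by
  apply list_prod_contr
  intro f hf y
  rw [List.mem_ofFn] at hf
  obtain ⟨l, rfl⟩ := hf
  exact pow_contr _ (hcontr l) _ y

lemma ofFn_pow_mul {M : Type*} [Monoid M] :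
    ∀ {d : ℕ} (T : Fin d → M), (∀ l m, Commute (T l) (T m)) →
      ∀ k j : Fin d → ℕ,
        (List.ofFn fun l => T l ^ k l).prod * (List.ofFn fun l => T l ^ j l).prod
          = (List.ofFn fun l => T l ^ (k l + j l)).prod := by
  intro d
  induction d with
  | zero => intro T h k j; simp
  | succ d ih =>
    intro T h k j
    simp only [List.ofFn_succ, List.prod_cons]
    have hc : Commute (T 0 ^ j 0) ((List.ofFn fun i : Fin d => T i.succ ^ k i.succ).prod) := by
      apply Commute.list_prod_right
      intro y hy
      rw [List.mem_ofFn] at hy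
      obtain ⟨i, rfl⟩ := hy
      exact (h 0 i.succ).pow_pow _ _
    calc T 0 ^ k 0 * (List.ofFn fun i : Fin d => T i.succ ^ k i.succ).prod *
          (T 0 ^ j 0 * (List.ofFn fun i : Fin d => T i.succ ^ j i.succ).prod)
        = T 0 ^ k 0 * ((List.ofFn fun i : Fin d => T i.succ ^ k i.succ).prod *
          T 0 ^ j 0) * (List.ofFn fun i : Fin d => T i.succ ^ j i.succ).prod := by
          rw [mul_assoc, mul_assoc, mul_assoc]
      _ = T 0 ^ k 0 * (T 0 ^ j 0 * (List.ofFn fun i : Fin d => T i.succ ^ k i.succ).prod) *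
          (List.ofFn fun i : Fin d => T i.succ ^ j i.succ).prod := by rw [hc.eq]
      _ = (T 0 ^ k 0 * T 0 ^ j 0) * ((List.ofFn fun i : Fin d => T i.succ ^ k i.succ).prod *
          (List.ofFn fun i : Fin d => T i.succ ^ j i.succ).prod) := by
          rw [mul_assoc, mul_assoc, mul_assoc]
      _ = T 0 ^ (k 0 + j 0) * (List.ofFn fun i : Fin d => T i.succ ^ (k i.succ + j i.succ)).prod := by
          rw [← pow_add, ih (fun i => T i.succ) (fun l m => h l.succ m.succ) _ _]

lemma Tpow_add {X : Type*} [AddCommGroup X] [Module ℝ X] {d : ℕ}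
    (T : Fin d → X →ₗ[ℝ] X) (hcomm : ∀ l m, T l ∘ₗ T m = T m ∘ₗ T l)
    (k j : Fin d → ℕ) (x : X) :
    Tpow T k (Tpow T j x) = Tpow T (k + j) x := by
  have h : ∀ l m, Commute (T l) (T m) := fun l m => hcomm l m
  have h2 := ofFn_pow_mul T h k j
  unfold Tpow
  simp only [Pi.add_apply]
  rw [← h2]
  rfl

lemma card_box (d n : ℕ) : (box d n).card = (n+1)^d := by
  simp [box, Fintype.card_piFinset]

lemma shift_bound {X : Type*} [NormedAddCommGroup X] [NormedSpace ℝ X] {d : ℕ}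
    (Tpow' : (Fin d → ℕ) → X →ₗ[ℝ] X)
    (hc : ∀ k (y : X), ‖Tpow' k y‖ ≤ ‖y‖)
    (x : X) (hx : ‖x‖ ≤ 1)
    (n Q : ℕ) (j : Fin d → ℕ) (hj : ∀ l, j l ≤ Q) :
    ‖(∑ k ∈ box d n, Tpow' k x) - ∑ k ∈ box d n, Tpow' (k + j) x‖
      ≤ 2 * (((n+1)^d - (n+1-Q)^d : ℕ) : ℝ) := by
  classical
  set B := box d n with hB
  set B' := B.image (· + j) with hB'
  set C : Finset (Fin d → ℕ) := Fintype.piFinset fun l => Finset.Icc (j l) n with hC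
  have hinj : ∀ a b : Fin d → ℕ, a + j = b + j → a = b := by
    intro a b hab
    funext l
    have := congrFun hab l
    simpa using this
  have hsum2 : ∑ k ∈ B, Tpow' (k + j) x = ∑ k ∈ B', Tpow' k x := by
    rw [hB', Finset.sum_image (fun a _ b _ h => hinj a b h)]
  have hCB : C ⊆ B := by
    intro k hk
    rw [hC, Fintype.mem_piFinset] at hk
    rw [hB, box, Fintype.mem_piFinset]
    intro l
    exact Finset.mem_range.2 (Nat.lt_succ_of_le (Finset.mem_Icc.1 (hk l)).2)
  have hCB' : C ⊆ B' := by
    intro k hk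
    rw [hC, Fintype.mem_piFinset] at hk
    rw [hB', Finset.mem_image]
    refine ⟨fun l => k l - j l, ?_, ?_⟩
    · rw [hB, box, Fintype.mem_piFinset]
      intro l
      exact Finset.mem_range.2 (Nat.lt_succ_of_le (le_trans (Nat.sub_le _ _)
        (Finset.mem_Icc.1 (hk l)).2))
    · funext l
      exact Nat.sub_add_cancel (Finset.mem_Icc.1 (hk l)).1
  have hcardB : B.card = (n+1)^d := card_box d n
  have hcardB' : B'.card = (n+1)^d := by
    rw [hB', Finset.card_image_of_injOn (fun a _ b _ h => hinj a b h), hcardB]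
  have hcardC : (n+1-Q)^d ≤ C.card := by
    rw [hC, Fintype.card_piFinset]
    calc (n+1-Q)^d = ∏ _l : Fin d, (n+1-Q) := by
          rw [Finset.prod_const, Finset.card_univ, Fintype.card_fin]
      _ ≤ ∏ l : Fin d, (Finset.Icc (j l) n).card := by
          apply Finset.prod_le_prod'
          intro l _
          rw [Nat.card_Icc]
          exact Nat.sub_le_sub_left (hj l) (n+1)
  have hsplit : ∀ (D : Finset (Fin d → ℕ)), C ⊆ D →
      ∑ k ∈ D, Tpow' k x = (∑ k ∈ D \ C, Tpow' k x) + ∑ k ∈ C, Tpow' k x :=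
    fun D hCD => (Finset.sum_sdiff hCD).symm
  rw [hsum2, hsplit B hCB, hsplit B' hCB']
  have hkey : ∀ (D : Finset (Fin d → ℕ)), ‖∑ k ∈ D, Tpow' k x‖ ≤ (D.card : ℝ) := by
    intro D
    calc ‖∑ k ∈ D, Tpow' k x‖ ≤ ∑ k ∈ D, ‖Tpow' k x‖ := norm_sum_le _ _
      _ ≤ ∑ _k ∈ D, (1:ℝ) := Finset.sum_le_sum fun k _ => le_trans (hc k x) hx
      _ = D.card := by simp
  have hcard1 : ((B \ C).card : ℝ) ≤ (((n+1)^d - (n+1-Q)^d : ℕ) : ℝ) := by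
    exact_mod_cast Nat.sub_le_sub_left hcardC _ |>.trans_eq' (by rw [Finset.card_sdiff_of_subset hCB, hcardB])
  have hcard2 : ((B' \ C).card : ℝ) ≤ (((n+1)^d - (n+1-Q)^d : ℕ) : ℝ) := by
    exact_mod_cast Nat.sub_le_sub_left hcardC _ |>.trans_eq' (by rw [Finset.card_sdiff_of_subset hCB', hcardB'])
  calc ‖(∑ k ∈ B \ C, Tpow' k x) + (∑ k ∈ C, Tpow' k x)
        - ((∑ k ∈ B' \ C, Tpow' k x) + ∑ k ∈ C, Tpow' k x)‖
      = ‖(∑ k ∈ B \ C, Tpow' k x) - (∑ k ∈ B' \ C, Tpow' k x)‖ := by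
        rw [add_sub_add_right_eq_sub]
    _ ≤ ‖∑ k ∈ B \ C, Tpow' k x‖ + ‖∑ k ∈ B' \ C, Tpow' k x‖ := norm_sub_le _ _
    _ ≤ (((n+1)^d - (n+1-Q)^d : ℕ) : ℝ) + (((n+1)^d - (n+1-Q)^d : ℕ) : ℝ) :=
        add_le_add (le_trans (hkey _) hcard1) (le_trans (hkey _) hcard2)
    _ = 2 * (((n+1)^d - (n+1-Q)^d : ℕ) : ℝ) := by ring

lemma pow_sub_pow_le' : ∀ (e : ℕ) (a b : ℝ), 0 ≤ b → b ≤ a →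
    a^(e+1) - b^(e+1) ≤ (e+1) * (a-b) * a^e := by
  intro e
  induction e with
  | zero => intro a b _ _; simp
  | succ e ih =>
    intro a b h0 hba
    have ha : 0 ≤ a := le_trans h0 hba
    have h1 := ih a b h0 hba
    have h2 : b^(e+1) ≤ a^(e+1) := pow_le_pow_left₀ h0 hba _
    have h3 : (0:ℝ) ≤ a^e := pow_nonneg ha _
    have key : a^(e+2) - b^(e+2) = a*(a^(e+1) - b^(e+1)) + (a-b)*b^(e+1) := by ring
    rw [key]
    have : a*(a^(e+1) - b^(e+1)) ≤ a * ((e+1) * (a-b) * a^e) := by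
      exact mul_le_mul_of_nonneg_left h1 ha
    calc a*(a^(e+1) - b^(e+1)) + (a-b)*b^(e+1)
        ≤ a * ((e+1) * (a-b) * a^e) + (a-b)*a^(e+1) := by
          apply add_le_add this
          exact mul_le_mul_of_nonneg_left h2 (by linarith)
      _ = (↑(e+1)+1) * (a-b) * a^(e+1) := by push_cast; ring

lemma two_mul_le_two_pow : ∀ (d : ℕ), 1 ≤ d → 2*d ≤ 2^d := by
  intro d
  induction d with
  | zero => omega
  | succ d ih =>
    intro _
    rcases Nat.eq_zero_or_pos d with rfl | hd
    · simp
    · have h1 := ih hd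
      have h2 : 2 ≤ 2^d := by
        calc 2 = 2^1 := rfl
          _ ≤ 2^d := Nat.pow_le_pow_right (by norm_num) hd
      calc 2*(d+1) = 2*d + 2 := by ring
        _ ≤ 2^d + 2^d := Nat.add_le_add h1 h2
        _ = 2^(d+1) := by ring

lemma numeric (d Q n : ℕ) (hd : 1 ≤ d) (δ : ℝ) (hδ : 0 < δ) (hQn : Q ≤ n)
    (hn : ⌈(2^d * Q : ℝ)/δ⌉₊ ≤ n) :
    (((n:ℝ)+1)^d)⁻¹ * (2 * (((n+1)^d - (n+1-Q)^d : ℕ) : ℝ)) ≤ δ := by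
  set a : ℝ := (n:ℝ)+1 with ha
  have ha0 : (0:ℝ) < a := by positivity
  have hQn1 : Q ≤ n + 1 := le_trans hQn (Nat.le_succ n)
  set b : ℝ := ((n+1-Q:ℕ):ℝ) with hb
  have hbeq : b = a - Q := by
    rw [hb, ha, Nat.cast_sub hQn1]; push_cast; ring
  have hb0 : 0 ≤ b := Nat.cast_nonneg _
  have hba : b ≤ a := by rw [hbeq]; have : (0:ℝ) ≤ Q := Nat.cast_nonneg _; linarith
  have hcast : (((n+1)^d - (n+1-Q)^d : ℕ) : ℝ) = a^d - b^d := by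
    rw [Nat.cast_sub (Nat.pow_le_pow_left (Nat.sub_le _ _) _)]
    push_cast [ha, hb]; ring
  rw [hcast]
  obtain ⟨e, rfl⟩ : ∃ e, d = e + 1 := ⟨d - 1, (Nat.succ_pred_eq_of_pos hd).symm⟩
  have h1 : a^(e+1) - b^(e+1) ≤ (e+1) * Q * a^e := by
    have h := pow_sub_pow_le' e a b hb0 hba
    have heq : (↑(e+1) : ℝ) * (a - b) * a^e = (e+1) * Q * a^e := by
      rw [hbeq]; push_cast; ring
    push_cast at h heq; linarith
  have hδa : (2^(e+1) * Q : ℝ) ≤ δ * a := by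
    have h2 : ((2^(e+1) * Q : ℝ))/δ ≤ n := by
      rw [← Nat.ceil_le] at *
      exact_mod_cast le_trans (Nat.ceil_le.2 (Nat.ceil_le.1 (le_refl _))) (by exact_mod_cast hn)
    rw [div_le_iff₀ hδ] at h2
    have : (n:ℝ) ≤ a := by rw [ha]; linarith
    nlinarith
  have h2d : ((2*(e+1) : ℕ) : ℝ) ≤ ((2^(e+1) : ℕ) : ℝ) := by
    exact_mod_cast two_mul_le_two_pow (e+1) (Nat.succ_le_succ (Nat.zero_le e))
  have hQ0 : (0:ℝ) ≤ Q := Nat.cast_nonneg _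
  have hae : (0:ℝ) < a^e := pow_pos ha0 _
  have hgoal : 2 * (a^(e+1) - b^(e+1)) ≤ δ * a^(e+1) := by
    have step1 : 2 * (a^(e+1) - b^(e+1)) ≤ 2 * ((e+1) * Q * a^e) := by linarith
    have step2 : 2 * ((e+1) * Q * a^e) ≤ (2^(e+1) * Q) * a^e := by
      have : (2 * ((e:ℝ)+1)) ≤ 2^(e+1) := by push_cast at h2d ⊢; linarith
      nlinarith
    have step3 : (2^(e+1) * Q : ℝ) * a^e ≤ (δ * a) * a^e :=
      mul_le_mul_of_nonneg_right hδa (le_of_lt hae)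
    calc 2 * (a^(e+1) - b^(e+1)) ≤ (δ * a) * a^e := by linarith
      _ = δ * a^(e+1) := by ring
  rw [inv_mul_le_iff₀ (pow_pos ha0 _)]
  linarith [hgoal]

end Aux

theorem stmt7 {X : Type*} [NormedAddCommGroup X] [NormedSpace ℝ X] [CompleteSpace X]
    (d : ℕ) (hd : 1 ≤ d) (T : Fin d → X →ₗ[ℝ] X)
    (hcomm : ∀ l m, T l ∘ₗ T m = T m ∘ₗ T l)
    (hcontr : ∀ l (y : X), ‖T l y‖ ≤ ‖y‖)
    (x : X) (hx : ‖x‖ ≤ 1)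
    (δ : ℝ) (hδ : 0 < δ)
    (Q : ℕ) (c : (Fin d → ℕ) → ℝ) (hc : ∀ j ∈ box d Q, c j ∈ Set.Icc (0:ℝ) 1)
    (hsum : ∑ j ∈ box d Q, c j = 1) :
    ∀ n, Phi d δ Q ≤ n →
      ‖erg T x n‖ ≤ ‖∑ j ∈ box d Q, c j • Tpow T j x‖ + δ := by
  intro n hn
  have hQn : Q ≤ n := le_trans (le_max_left _ _) hn
  have hceil : ⌈(2^d * Q : ℝ)/δ⌉₊ ≤ n := le_trans (le_max_right _ _) hn
  set z := ∑ j ∈ box d Q, c j • Tpow T j x with hzdef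
  set S := ∑ k ∈ box d n, Tpow T k x with hSdef
  set N : ℝ := (((n:ℝ)+1)^d)⁻¹ with hNdef
  have hN0 : 0 ≤ N := by positivity
  have hNcard : N * ((n:ℝ)+1)^d = 1 := inv_mul_cancel₀ (by positivity)
  -- key identity
  have hz : ∀ k, Tpow T k z = ∑ j ∈ box d Q, c j • Tpow T (k + j) x := by
    intro k
    rw [hzdef, map_sum]
    apply Finset.sum_congr rfl
    intro j _
    rw [map_smul, Tpow_add T hcomm k j x]
  have hSz : ∑ k ∈ box d n, Tpow T k z
      = ∑ j ∈ box d Q, c j • ∑ k ∈ box d n, Tpow T (k + j) x := by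
    calc ∑ k ∈ box d n, Tpow T k z
        = ∑ k ∈ box d n, ∑ j ∈ box d Q, c j • Tpow T (k + j) x :=
          Finset.sum_congr rfl fun k _ => hz k
      _ = ∑ j ∈ box d Q, ∑ k ∈ box d n, c j • Tpow T (k + j) x := Finset.sum_comm
      _ = ∑ j ∈ box d Q, c j • ∑ k ∈ box d n, Tpow T (k + j) x := by
          apply Finset.sum_congr rfl
          intro j _
          rw [Finset.smul_sum]
  have hSconv : S = ∑ j ∈ box d Q, c j • S := by
    rw [← Finset.sum_smul, hsum, one_smul]
  have hdiff : S - ∑ k ∈ box d n, Tpow T k z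
      = ∑ j ∈ box d Q, c j • (S - ∑ k ∈ box d n, Tpow T (k + j) x) := by
    calc S - ∑ k ∈ box d n, Tpow T k z
        = (∑ j ∈ box d Q, c j • S) - ∑ j ∈ box d Q, c j • ∑ k ∈ box d n, Tpow T (k + j) x := by
          rw [hSz, ← hSconv]
      _ = ∑ j ∈ box d Q, (c j • S - c j • ∑ k ∈ box d n, Tpow T (k + j) x) :=
          (Finset.sum_sub_distrib _ _).symm
      _ = ∑ j ∈ box d Q, c j • (S - ∑ k ∈ box d n, Tpow T (k + j) x) := by
          apply Finset.sum_congr rfl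
          intro j _
          rw [smul_sub]
  set E : ℝ := 2 * (((n+1)^d - (n+1-Q)^d : ℕ) : ℝ) with hEdef
  have hE0 : 0 ≤ E := by positivity
  have hEj : ∀ j ∈ box d Q, ‖S - ∑ k ∈ box d n, Tpow T (k + j) x‖ ≤ E := by
    intro j hj
    apply shift_bound (Tpow T) (Tpow_contr T hcontr) x hx n Q j
    intro l
    rw [box, Fintype.mem_piFinset] at hj
    exact Nat.lt_succ_iff.1 (Finset.mem_range.1 (hj l))
  have hnorm_diff : ‖S - ∑ k ∈ box d n, Tpow T k z‖ ≤ E := by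
    rw [hdiff]
    calc ‖∑ j ∈ box d Q, c j • (S - ∑ k ∈ box d n, Tpow T (k + j) x)‖
        ≤ ∑ j ∈ box d Q, ‖c j • (S - ∑ k ∈ box d n, Tpow T (k + j) x)‖ := norm_sum_le _ _
      _ ≤ ∑ j ∈ box d Q, c j * E := by
          apply Finset.sum_le_sum
          intro j hj
          rw [norm_smul, Real.norm_eq_abs, abs_of_nonneg (hc j hj).1]
          exact mul_le_mul_of_nonneg_left (hEj j hj) (hc j hj).1
      _ = E := by rw [← Finset.sum_mul, hsum, one_mul]
  have hTz : ‖N • ∑ k ∈ box d n, Tpow T k z‖ ≤ ‖z‖ := by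
    rw [norm_smul, Real.norm_eq_abs, abs_of_nonneg hN0]
    calc N * ‖∑ k ∈ box d n, Tpow T k z‖
        ≤ N * (((n:ℝ)+1)^d * ‖z‖) := by
          apply mul_le_mul_of_nonneg_left _ hN0
          calc ‖∑ k ∈ box d n, Tpow T k z‖
              ≤ ∑ k ∈ box d n, ‖Tpow T k z‖ := norm_sum_le _ _
            _ ≤ ∑ _k ∈ box d n, ‖z‖ := Finset.sum_le_sum fun k _ => Tpow_contr T hcontr k z
            _ = ((box d n).card : ℝ) * ‖z‖ := by rw [Finset.sum_const, nsmul_eq_mul]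
            _ = ((n:ℝ)+1)^d * ‖z‖ := by rw [card_box]; push_cast; ring
      _ = ‖z‖ := by rw [← mul_assoc, hNcard, one_mul]
  have herg : erg T x n = N • (∑ k ∈ box d n, Tpow T k z) + N • (S - ∑ k ∈ box d n, Tpow T k z) := by
    rw [← smul_add, erg, hNdef]
    congr 1
    abel
  rw [herg]
  calc ‖N • (∑ k ∈ box d n, Tpow T k z) + N • (S - ∑ k ∈ box d n, Tpow T k z)‖
      ≤ ‖N • (∑ k ∈ box d n, Tpow T k z)‖ + ‖N • (S - ∑ k ∈ box d n, Tpow T k z)‖ :=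
        norm_add_le _ _
    _ ≤ ‖z‖ + N * E := by
        apply add_le_add hTz
        rw [norm_smul, Real.norm_eq_abs, abs_of_nonneg hN0]
        exact mul_le_mul_of_nonneg_left hnorm_diff hN0
    _ ≤ ‖z‖ + δ := by
        apply add_le_add (le_refl _)
        exact numeric d Q n hd δ hδ hQn hceil
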